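/- Let V be a finite-dimensional real inner product space, p and q positive integers, and J : V → V a linear map with J² = p·J + q·id that is self-adjoint: ⟨J x, y⟩ = ⟨x, J y⟩ for all x, y ∈ V. Let W ⊆ V be a subspace with orthogonal projection P, set T x = P(J x), and let D ⊆ W be a subspace with T(D) ⊆ D that is slant with angle θ, i.e. ‖T x‖² = cos²θ · ‖J x‖² for every x ∈ D. Then T² = cos²θ · (p·T + q·id) on D, i.e. T(T x) = cos²θ · ( p·T x + q·x ) for every x ∈ D. -/

import Mathlib

open RealInnerProductSpace

/-- For a slant subspace `D ⊆ W` with slant angle `θ` that is invariant under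
`T` (`T(D) ⊆ D`), one has `T² = cos²θ · (p·T + q·id)` on `D`. -/
theorem slant_T_squared {V : Type*} [NormedAddCommGroup V] [InnerProductSpace ℝ V]
    [FiniteDimensional ℝ V]
    (p q : ℕ) (hp : 0 < p) (hq : 0 < q) (J : V →ₗ[ℝ] V)
    (hJ2 : ∀ x : V, J (J x) = (p : ℝ) • J x + (q : ℝ) • x)
    (hsym : ∀ x y : V, ⟪J x, y⟫ = ⟪x, J y⟫)
    (W : Submodule ℝ V)
    (T : V → V) (hT : ∀ x : V, T x = (W.orthogonalProjection (J x) : V))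
    (D : Submodule ℝ V) (hD : D ≤ W)
    (hTD : ∀ x ∈ D, T x ∈ D) (θ : ℝ)
    (hslant : ∀ x ∈ D, ‖T x‖ ^ 2 = Real.cos θ ^ 2 * ‖J x‖ ^ 2) :
    ∀ x ∈ D, T (T x) = Real.cos θ ^ 2 • ((p : ℝ) • T x + (q : ℝ) • x) := by
  intro x hx
  set c := Real.cos θ ^ 2 with hc
  -- T is additive
  have hTadd : ∀ a b : V, T (a + b) = T a + T b := by
    intro a b
    simp [hT, map_add]
  -- projection identity: for w ∈ W, ⟪T v, w⟫ = ⟪J v, w⟫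
  have hproj : ∀ (v : V), ∀ w ∈ W, ⟪T v, w⟫ = ⟪J v, w⟫ := by
    intro v w hw
    have h2 := Submodule.starProjection_inner_eq_zero (K := W) (J v) w hw
    rw [inner_sub_left, Submodule.starProjection_apply] at h2
    rw [hT]
    linarith
  -- symmetry of the bilinear form ⟪T a, b⟫ on W
  have hsymT : ∀ a ∈ W, ∀ b ∈ W, ⟪T a, b⟫ = ⟪T b, a⟫ := by
    intro a ha b hb
    rw [hproj a b hb, hproj b a ha, hsym, real_inner_comm]
  -- quadratic identity from the slant condition
  have hQ : ∀ y ∈ D, ⟪T y, T y⟫ = c * ((p : ℝ) * ⟪T y, y⟫ + (q : ℝ) * ⟪y, y⟫) := by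
    intro y hy
    have h1 := hslant y hy
    have hJn : ⟪J y, J y⟫ = (p : ℝ) * ⟪T y, y⟫ + (q : ℝ) * ⟪y, y⟫ := by
      have e1 : ⟪J y, J y⟫ = ⟪y, J (J y)⟫ := hsym y (J y)
      have e2 : ⟪y, J (J y)⟫ = (p : ℝ) * ⟪y, J y⟫ + (q : ℝ) * ⟪y, y⟫ := by
        rw [hJ2 y, inner_add_right, real_inner_smul_right, real_inner_smul_right]
      have e3 : ⟪y, J y⟫ = ⟪T y, y⟫ := by
        rw [hproj y y (hD hy), real_inner_comm]
      rw [e1, e2, e3]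
    have n1 : ⟪T y, T y⟫ = ‖T y‖ ^ 2 := real_inner_self_eq_norm_sq (T y)
    have n2 : ⟪J y, J y⟫ = ‖J y‖ ^ 2 := real_inner_self_eq_norm_sq (J y)
    rw [n1, h1, ← n2, hJn]
  -- polarization: bilinear identity on D
  have hB : ∀ z ∈ D, ⟪T x, T z⟫ = c * ((p : ℝ) * ⟪T x, z⟫ + (q : ℝ) * ⟪x, z⟫) := by
    intro z hz
    have hxz : x + z ∈ D := D.add_mem hx hz
    have Qx := hQ x hx
    have Qz := hQ z hz
    have Qxz := hQ (x + z) hxz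
    rw [hTadd x z] at Qxz
    simp only [inner_add_left, inner_add_right] at Qxz
    have s1 : ⟪T z, T x⟫ = ⟪T x, T z⟫ := real_inner_comm _ _
    have s2 : ⟪T z, x⟫ = ⟪T x, z⟫ :=
      hsymT z (hD hz) x (hD hx)
    have s3 : ⟪z, x⟫ = ⟪x, z⟫ := real_inner_comm _ _
    rw [s1, s2, s3] at Qxz
    nlinarith [Qx, Qz, Qxz]
  -- ⟪T (T x), z⟫ = ⟪T x, T z⟫ for z ∈ W
  have hTT : ∀ z ∈ W, ⟪T (T x), z⟫ = ⟪T x, T z⟫ := by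
    intro z hz
    have hTxW : T x ∈ W := hD (hTD x hx)
    rw [hproj (T x) z hz, hsym, real_inner_comm, ← hproj z (T x) hTxW,
      real_inner_comm]
  -- the difference vector
  set v := T (T x) - c • ((p : ℝ) • T x + (q : ℝ) • x) with hv
  have hvD : v ∈ D := by
    apply D.sub_mem
    · exact hTD (T x) (hTD x hx)
    · exact D.smul_mem _ (D.add_mem (D.smul_mem _ (hTD x hx)) (D.smul_mem _ hx))
  have hkey : ∀ z ∈ D, ⟪v, z⟫ = 0 := by
    intro z hz
    rw [hv, inner_sub_left, hTT z (hD hz), real_inner_smul_left, inner_add_left,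
      real_inner_smul_left, real_inner_smul_left, hB z hz]
    ring
  have hv0 : v = 0 := by
    have := hkey v hvD
    rwa [real_inner_self_eq_norm_sq, pow_eq_zero_iff (by norm_num), norm_eq_zero] at this
  have := sub_eq_zero.mp hv0
  rw [this]
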